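/- arXiv:1307.1925 — 2 statements merged into one kernel-verified Lean document; each statement's English description precedes it below -/
import Mathlib

section
/- Let f : ℝ³×ℝ³ → [0,∞) be measurable and essentially bounded, let b > 0, and set ρ(x) = ∫_{ℝ³} f(x,v) dv. Then there exists a constant C depending only on b such that ‖ρ‖_{L^{(b+3)/3}(ℝ³)} ≤ C ‖f‖_{L∞}^{b/(3+b)} ( ∬_{ℝ³×ℝ³} |v|^b f(x,v) dx dv )^{3/(3+b)}. -/
open MeasureTheory Set Filter
open scoped ENNReal

noncomputable section

/-- Three-dimensional Euclidean space. -/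
abbrev E3 : Type := EuclideanSpace ℝ (Fin 3)

lemma ae_ne_zero_E3 : ∀ᵐ v : E3 ∂volume, v ≠ 0 := by
  rw [ae_iff]
  have : {v : E3 | ¬ v ≠ 0} = {(0 : E3)} := by ext v; simp
  rw [this, measure_singleton]

/-- Pointwise interpolation bound in the velocity variable. -/
lemma key_bound (b : ℝ) (hb : 0 < b) (M : ℝ≥0∞) (hM0 : M ≠ 0) (hMt : M ≠ ⊤)
    (g : E3 → ℝ) (hg : Measurable g) (hg0 : ∀ v, 0 ≤ g v)
    (hsec : ∀ᵐ v : E3 ∂volume, ENNReal.ofReal (g v) ≤ M) :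
    (∫⁻ v : E3, ENNReal.ofReal (g v)) ≤
      (volume (Metric.ball (0:E3) 1) + 1) * M ^ (b / (b + 3)) *
        (∫⁻ v : E3, ENNReal.ofReal (‖v‖ ^ b * g v)) ^ (3 / (b + 3)) := by
  set c₀ := volume (Metric.ball (0:E3) 1) with hc0
  set m := ∫⁻ v : E3, ENNReal.ofReal (‖v‖ ^ b * g v) with hm
  have hb3 : (0:ℝ) < b + 3 := by linarith
  have hs : (0:ℝ) < 3 / (b + 3) := by positivity
  have hmeas : Measurable fun v : E3 => ENNReal.ofReal (‖v‖ ^ b * g v) :=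
    ENNReal.measurable_ofReal.comp
      ((((Real.continuous_rpow_const hb.le).measurable).comp measurable_norm).mul hg)
  rcases eq_or_ne m ⊤ with hmt | hmt
  · rw [hmt, ENNReal.top_rpow_of_pos hs, ENNReal.mul_top]
    · exact le_top
    · exact mul_ne_zero (by simp) (ENNReal.rpow_pos hM0.bot_lt hMt).ne'
  rcases eq_or_ne m 0 with hm0 | hm0
  · have h1 : ∀ᵐ v : E3 ∂volume, ENNReal.ofReal (‖v‖ ^ b * g v) = 0 :=
      (lintegral_eq_zero_iff hmeas).mp hm0
    have h2 : ∀ᵐ v : E3 ∂volume, ENNReal.ofReal (g v) = 0 := by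
      filter_upwards [h1, ae_ne_zero_E3] with v h hv
      rw [ENNReal.ofReal_eq_zero] at h ⊢
      have hnv : 0 < ‖v‖ ^ b := Real.rpow_pos_of_pos (norm_pos_iff.mpr hv) b
      nlinarith [hg0 v]
    rw [lintegral_congr_ae h2, lintegral_zero]
    exact zero_le
  -- main case
  set u := m / M with hu
  have hu0 : u ≠ 0 := by
    simp only [hu, ne_eq, ENNReal.div_eq_zero_iff]
    tauto
  have hut : u ≠ ⊤ := by
    simp only [hu, ne_eq, ENNReal.div_eq_top]
    tauto
  set r : ℝ≥0∞ := u ^ (1 / (b + 3)) with hrdef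
  have hr0 : r ≠ 0 := (ENNReal.rpow_pos hu0.bot_lt hut).ne'
  have hrt : r ≠ ⊤ := ENNReal.rpow_ne_top_of_nonneg (by positivity) hut
  set R : ℝ := r.toReal with hR
  have hR0 : 0 < R := ENNReal.toReal_pos hr0 hrt
  have hofR : ENNReal.ofReal R = r := ENNReal.ofReal_toReal hrt
  have hmu : m = M * u := by rw [hu, ENNReal.mul_div_cancel hM0 hMt]
  -- r ^ 3 = u ^ (3/(b+3))  (ℕ-power)
  have hr3 : (r : ℝ≥0∞) ^ (3:ℕ) = u ^ (3 / (b + 3)) := by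
    rw [← ENNReal.rpow_natCast r 3, hrdef, ← ENNReal.rpow_mul]
    push_cast
    congr 1
    ring
  -- r ^ (-b) * m = M * u ^ (3/(b+3))
  have hrb : r ^ (-b) * m = M * u ^ (3 / (b + 3)) := by
    have h1 : r ^ (-b) = u ^ (-(b / (b + 3))) := by
      rw [hrdef, ← ENNReal.rpow_mul]
      congr 1
      field_simp
    rw [h1, hmu]
    calc u ^ (-(b / (b + 3))) * (M * u)
        = M * (u ^ (-(b / (b + 3))) * u ^ (1:ℝ)) := by rw [ENNReal.rpow_one]; ring
      _ = M * u ^ (-(b / (b + 3)) + 1) := by rw [← ENNReal.rpow_add _ _ hu0 hut]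
      _ = M * u ^ (3 / (b + 3)) := by
          congr 1
          field_simp
          ring_nf
  -- split the integral
  have hsplit : (∫⁻ v : E3, ENNReal.ofReal (g v)) =
      (∫⁻ v in Metric.ball (0:E3) R, ENNReal.ofReal (g v)) +
      (∫⁻ v in (Metric.ball (0:E3) R)ᶜ, ENNReal.ofReal (g v)) :=
    (lintegral_add_compl _ measurableSet_ball).symm
  -- ball part
  have hball : (∫⁻ v in Metric.ball (0:E3) R, ENNReal.ofReal (g v)) ≤
      c₀ * (M * u ^ (3 / (b + 3))) := by
    calc (∫⁻ v in Metric.ball (0:E3) R, ENNReal.ofReal (g v))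
        ≤ ∫⁻ _ in Metric.ball (0:E3) R, M := lintegral_mono_ae (ae_restrict_of_ae hsec)
      _ = M * volume (Metric.ball (0:E3) R) := setLIntegral_const _ _
      _ = M * (ENNReal.ofReal (R ^ Module.finrank ℝ E3) * c₀) := by
          rw [Measure.addHaar_ball _ _ hR0.le]
      _ = c₀ * (M * u ^ (3 / (b + 3))) := by
          rw [finrank_euclideanSpace_fin, ENNReal.ofReal_pow hR0.le, hofR, hr3]
          ring
  -- complement part
  have hcompl : (∫⁻ v in (Metric.ball (0:E3) R)ᶜ, ENNReal.ofReal (g v)) ≤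
      M * u ^ (3 / (b + 3)) := by
    have hrbne : r ^ (b:ℝ) ≠ ⊤ := ENNReal.rpow_ne_top_of_nonneg hb.le hrt
    have hrbne0 : r ^ (b:ℝ) ≠ 0 := (ENNReal.rpow_pos hr0.bot_lt hrt).ne'
    have h1 : r ^ (b:ℝ) * (∫⁻ v in (Metric.ball (0:E3) R)ᶜ, ENNReal.ofReal (g v)) ≤ m := by
      rw [← lintegral_const_mul' _ _ hrbne]
      calc (∫⁻ v in (Metric.ball (0:E3) R)ᶜ, r ^ (b:ℝ) * ENNReal.ofReal (g v))
          ≤ ∫⁻ v in (Metric.ball (0:E3) R)ᶜ, ENNReal.ofReal (‖v‖ ^ b * g v) := by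
            refine setLIntegral_mono hmeas fun v hv => ?_
            have hRv : R ≤ ‖v‖ := by
              simpa [Metric.mem_ball, dist_zero_right, not_lt] using hv
            have h2 : r ^ (b:ℝ) = ENNReal.ofReal (R ^ b) := by
              rw [← hofR, ENNReal.ofReal_rpow_of_pos hR0]
            rw [h2, ← ENNReal.ofReal_mul (by positivity)]
            exact ENNReal.ofReal_le_ofReal
              (mul_le_mul_of_nonneg_right (Real.rpow_le_rpow hR0.le hRv hb.le) (hg0 v))
        _ ≤ m := by rw [hm]; exact setLIntegral_le_lintegral _ _
    have h3 := mul_le_mul_right h1 (r ^ (-b))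
    rwa [← mul_assoc, ← ENNReal.rpow_add _ _ hr0 hrt, neg_add_cancel, ENNReal.rpow_zero,
      one_mul, hrb] at h3
  -- combine
  have htotal : (∫⁻ v : E3, ENNReal.ofReal (g v)) ≤
      (c₀ + 1) * (M * u ^ (3 / (b + 3))) := by
    rw [hsplit]
    calc (∫⁻ v in Metric.ball (0:E3) R, ENNReal.ofReal (g v)) +
          (∫⁻ v in (Metric.ball (0:E3) R)ᶜ, ENNReal.ofReal (g v))
        ≤ c₀ * (M * u ^ (3 / (b + 3))) + M * u ^ (3 / (b + 3)) := add_le_add hball hcompl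
      _ = (c₀ + 1) * (M * u ^ (3 / (b + 3))) := by ring
  have hMM : M ^ (b / (b + 3)) * M ^ (3 / (b + 3)) = M := by
    rw [← ENNReal.rpow_add _ _ hM0 hMt, ← add_div, div_self hb3.ne', ENNReal.rpow_one]
  have hfin : (c₀ + 1) * M ^ (b / (b + 3)) * m ^ (3 / (b + 3)) =
      (c₀ + 1) * (M * u ^ (3 / (b + 3))) := by
    rw [hmu, ENNReal.mul_rpow_of_nonneg M u hs.le]
    calc (c₀ + 1) * M ^ (b / (b + 3)) * (M ^ (3 / (b + 3)) * u ^ (3 / (b + 3)))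
        = (c₀ + 1) * ((M ^ (b / (b + 3)) * M ^ (3 / (b + 3))) * u ^ (3 / (b + 3))) := by ring
      _ = (c₀ + 1) * (M * u ^ (3 / (b + 3))) := by rw [hMM]
  exact htotal.trans (le_of_eq hfin.symm)

/-- Interpolation estimate for the spatial density. -/
theorem statement_3 (b : ℝ) (hb : 0 < b) :
    ∃ C : ℝ, 0 < C ∧
      ∀ f : E3 → E3 → ℝ,
        Measurable (fun p : E3 × E3 => f p.1 p.2) →
        (∀ x v, 0 ≤ f x v) →
        eLpNorm (fun p : E3 × E3 => f p.1 p.2) ⊤ volume < ⊤ →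
        eLpNorm (fun x : E3 => ∫ v : E3, f x v) (ENNReal.ofReal ((b + 3) / 3)) volume ≤
          ENNReal.ofReal C
            * eLpNorm (fun p : E3 × E3 => f p.1 p.2) ⊤ volume ^ (b / (3 + b))
            * (∫⁻ p : E3 × E3, ENNReal.ofReal (‖p.2‖ ^ b * f p.1 p.2)) ^ (3 / (3 + b)) := by
  have hb3 : (0:ℝ) < b + 3 := by linarith
  set c₀ := volume (Metric.ball (0:E3) 1) with hc0
  have hc0t : c₀ ≠ ⊤ := measure_ball_lt_top.ne
  refine ⟨(c₀ + 1).toReal, ENNReal.toReal_pos (by simp) (by finiteness), ?_⟩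
  intro f hf hf0 hMlt
  set M := eLpNorm (fun p : E3 × E3 => f p.1 p.2) ⊤ volume with hM
  have hMt : M ≠ ⊤ := hMlt.ne
  have hofC : ENNReal.ofReal (c₀ + 1).toReal = c₀ + 1 := ENNReal.ofReal_toReal (by finiteness)
  rw [hofC, show (3:ℝ) + b = b + 3 from by ring]
  rcases eq_or_ne M 0 with hM0 | hM0
  · -- trivial case: f vanishes a.e.
    have hfz : (fun p : E3 × E3 => f p.1 p.2) =ᵐ[volume] 0 := by
      rw [hM, eLpNorm_exponent_top, eLpNormEssSup_eq_zero_iff] at hM0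
      exact hM0
    have haex : ∀ᵐ x : E3 ∂volume, ∀ᵐ v : E3 ∂volume, f x v = 0 := by
      rw [EventuallyEq, Measure.volume_eq_prod] at hfz
      exact Measure.ae_ae_of_ae_prod hfz
    have hρ : (fun x : E3 => ∫ v : E3, f x v) =ᵐ[volume] 0 := by
      filter_upwards [haex] with x hx
      have : (fun v : E3 => f x v) =ᵐ[volume] 0 := hx
      simp [integral_congr_ae this]
    rw [eLpNorm_eq_zero_of_ae_zero hρ]
    exact zero_le
  -- section-wise ess-sup bound
  have hsec : ∀ᵐ x : E3 ∂volume, ∀ᵐ v : E3 ∂volume, ENNReal.ofReal (f x v) ≤ M := by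
    have h := ae_le_eLpNormEssSup (f := fun p : E3 × E3 => f p.1 p.2) (μ := volume)
    have h' : ∀ᵐ p : E3 × E3 ∂volume, ENNReal.ofReal (f p.1 p.2) ≤ M := by
      filter_upwards [h] with p hp
      rw [hM, eLpNorm_exponent_top, ← Real.enorm_eq_ofReal (hf0 p.1 p.2)]
      exact_mod_cast hp
    rw [Measure.volume_eq_prod] at h'
    exact Measure.ae_ae_of_ae_prod h'
  set m : E3 → ℝ≥0∞ := fun x => ∫⁻ v : E3, ENNReal.ofReal (‖v‖ ^ b * f x v) with hmdef
  have hgmeas : Measurable fun p : E3 × E3 => ENNReal.ofReal (‖p.2‖ ^ b * f p.1 p.2) :=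
    ENNReal.measurable_ofReal.comp
      ((((Real.continuous_rpow_const hb.le).measurable).comp (measurable_snd.norm)).mul hf)
  have hI : (∫⁻ p : E3 × E3, ENNReal.ofReal (‖p.2‖ ^ b * f p.1 p.2)) = ∫⁻ x : E3, m x := by
    rw [Measure.volume_eq_prod, lintegral_prod _ hgmeas.aemeasurable]
  rw [hI]
  -- pointwise bound
  have hkey : ∀ᵐ x : E3 ∂volume,
      (∫⁻ v : E3, ENNReal.ofReal (f x v)) ≤
        (c₀ + 1) * M ^ (b / (b + 3)) * (m x) ^ (3 / (b + 3)) := by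
    filter_upwards [hsec] with x hx
    exact key_bound b hb M hM0 hMt (fun v => f x v)
      (hf.comp measurable_prodMk_left) (hf0 x) hx
  -- rewrite the Lp-norm
  have hp0 : ENNReal.ofReal ((b + 3) / 3) ≠ 0 := by
    simp only [ne_eq, ENNReal.ofReal_eq_zero, not_le]
    positivity
  have hptoReal : (ENNReal.ofReal ((b + 3) / 3)).toReal = (b + 3) / 3 :=
    ENNReal.toReal_ofReal (by positivity)
  rw [eLpNorm_eq_lintegral_rpow_enorm_toReal hp0 ENNReal.ofReal_ne_top, hptoReal]
  set p : ℝ := (b + 3) / 3 with hpdef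
  have hp1 : (0:ℝ) < p := by positivity
  have hinvp : 1 / p = 3 / (b + 3) := by rw [hpdef]; rw [one_div_div]
  -- pointwise comparison of the norm with the lintegral
  have hρle : ∀ x : E3, ((‖∫ v : E3, f x v‖₊ : ℝ≥0∞)) ≤ ∫⁻ v : E3, ENNReal.ofReal (f x v) := by
    intro x
    rw [← enorm_eq_nnnorm, Real.enorm_eq_ofReal (integral_nonneg (hf0 x))]
    by_cases hint : Integrable (fun v : E3 => f x v) volume
    · rw [ofReal_integral_eq_lintegral_ofReal hint (ae_of_all _ (hf0 x))]
    · rw [integral_undef hint]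
      simp
  set K : ℝ≥0∞ := (c₀ + 1) * M ^ (b / (b + 3)) with hK
  have hKt : K ≠ ⊤ := by
    rw [hK]
    exact ENNReal.mul_ne_top (by finiteness) (ENNReal.rpow_ne_top_of_nonneg (by positivity) hMt)
  have hKpt : K ^ p ≠ ⊤ := ENNReal.rpow_ne_top_of_nonneg hp1.le hKt
  calc (∫⁻ x : E3, (‖∫ v : E3, f x v‖₊ : ℝ≥0∞) ^ p) ^ (1 / p)
      ≤ (∫⁻ x : E3, (K * (m x) ^ (3 / (b + 3))) ^ p) ^ (1 / p) := by
        refine ENNReal.rpow_le_rpow ?_ (by positivity)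
        refine lintegral_mono_ae ?_
        filter_upwards [hkey] with x hx
        exact ENNReal.rpow_le_rpow ((hρle x).trans hx) hp1.le
    _ = (K ^ p * ∫⁻ x : E3, m x) ^ (1 / p) := by
        congr 1
        rw [← lintegral_const_mul' _ _ hKpt]
        refine lintegral_congr fun x => ?_
        rw [ENNReal.mul_rpow_of_nonneg _ _ hp1.le, ← ENNReal.rpow_mul,
          show 3 / (b + 3) * p = 1 from by rw [hpdef]; field_simp, ENNReal.rpow_one]
    _ = K * (∫⁻ x : E3, m x) ^ (3 / (b + 3)) := by
        rw [ENNReal.mul_rpow_of_nonneg _ _ (by positivity), ← ENNReal.rpow_mul,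
          show p * (1 / p) = 1 from by field_simp, ENNReal.rpow_one, hinvp]
    _ = (c₀ + 1) * M ^ (b / (b + 3)) * (∫⁻ x : E3, m x) ^ (3 / (b + 3)) := by rw [hK]

end
end

section
/- Let (f,ξ) be a classical solution of the Vlasov–Poisson system with point charge on [0,T], and let (𝐱(t),𝐯(t)) = (𝐱(t,x,v),𝐯(t,x,v)) be any plasma trajectory, i.e. a solution of d𝐱/dt = 𝐯, d𝐯/dt = E(t,𝐱) + (𝐱−ξ(t))/|𝐱−ξ(t)|³ with 𝐱(t) ≠ ξ(t) for all t. Then for all t ∈ [0,T], (d/dt) √(h(t,𝐱(t),𝐯(t))) ≤ |E(t,𝐱(t))| + |E(t,ξ(t))|. -/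
open MeasureTheory Set Filter
open scoped ENNReal

noncomputable section

/-- Spatial density `ρ(t,x) = ∫ f(t,x,v) dv`. -/
def rho (f : ℝ → E3 → E3 → ℝ) (t : ℝ) (x : E3) : ℝ := ∫ v : E3, f t x v

/-- Self-induced electric field `E(t,x) = ∫ (x-y)/|x-y|³ ρ(t,y) dy`. -/
def Efield (f : ℝ → E3 → E3 → ℝ) (t : ℝ) (x : E3) : E3 :=
  ∫ y : E3, (rho f t y / ‖x - y‖ ^ 3) • (x - y)

/-- Singular field generated by the point charge located at `ξ t`:
`F(t,x) = (x-ξ(t))/|x-ξ(t)|³`. -/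
def Fpt (ξ : ℝ → E3) (t : ℝ) (x : E3) : E3 := (‖x - ξ t‖ ^ 3)⁻¹ • (x - ξ t)

/-- Total mass `M(t) = ∬ f(t,x,v) dx dv`. -/
def mass (f : ℝ → E3 → E3 → ℝ) (t : ℝ) : ℝ := ∫ p : E3 × E3, f t p.1 p.2

/-- Total energy `𝓗(t)`. -/
def energy (f : ℝ → E3 → E3 → ℝ) (ξ η : ℝ → E3) (t : ℝ) : ℝ :=
    (1 / 2) * ∫ p : E3 × E3, ‖p.2‖ ^ 2 * f t p.1 p.2
  + (1 / 2) * ‖η t‖ ^ 2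
  + (1 / 2) * ∫ x : E3, ∫ y : E3, rho f t x * rho f t y / ‖x - y‖
  + ∫ x : E3, rho f t x / ‖x - ξ t‖

/-- `L^∞` norm of the initial datum `‖f₀‖_{L^∞}`. -/
def supf0 (f : ℝ → E3 → E3 → ℝ) : ℝ :=
  (eLpNorm (fun p : E3 × E3 => f 0 p.1 p.2) ⊤ volume).toReal

/-- A classical solution of the Vlasov–Poisson system with point charge on `[0,T]`:
`f` is a nonnegative `C¹` compactly supported density whose initial datum vanishes
in a neighborhood of the charge `ξ 0`, `ξ ∈ C²` with `ξ' = η`, `η' = E(t,ξ(t))`,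
and the Vlasov equation holds pointwise (away from the charge). -/
structure VPClassicalSolution (T : ℝ) where
  f : ℝ → E3 → E3 → ℝ
  ξ : ℝ → E3
  η : ℝ → E3
  T_pos : 0 < T
  f_nonneg : ∀ t x v, 0 ≤ f t x v
  f_c1 : ContDiff ℝ 1 (fun p : ℝ × E3 × E3 => f p.1 p.2.1 p.2.2)
  f_cpt : HasCompactSupport (fun p : ℝ × E3 × E3 => f p.1 p.2.1 p.2.2)
  f0_vanishes_near_charge : ∃ ε > 0, ∀ x v, ‖x - ξ 0‖ < ε → f 0 x v = 0
  ξ_c2 : ContDiff ℝ 2 ξ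
  ξ_ode : ∀ t, HasDerivAt ξ (η t) t
  η_ode : ∀ t ∈ Icc (0 : ℝ) T, HasDerivAt η (Efield f t (ξ t)) t
  vlasov : ∀ t ∈ Icc (0 : ℝ) T, ∀ x v, x ≠ ξ t →
      deriv (fun τ : ℝ => f τ x v) t
      + fderiv ℝ (fun y : E3 => f t y v) x v
      + fderiv ℝ (fun w : E3 => f t x w) v (Efield f t x + Fpt ξ t x) = 0

/-- The microscopic energy function
`h(t,x,v) = |v-η(t)|²/2 + 1/|x-ξ(t)| + 𝓗(0) + M₀⁻¹ + 1`. -/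
def hEnergy (f : ℝ → E3 → E3 → ℝ) (ξ η : ℝ → E3) (t : ℝ) (x v : E3) : ℝ :=
  ‖v - η t‖ ^ 2 / 2 + ‖x - ξ t‖⁻¹ + energy f ξ η 0 + (mass f 0)⁻¹ + 1

/-- The energy moment `H̃_k(t) = ∬ h(t,x,v)^{k/2} f(t,x,v) dx dv`. -/
def Htilde (f : ℝ → E3 → E3 → ℝ) (ξ η : ℝ → E3) (k t : ℝ) : ℝ :=
  ∫ p : E3 × E3, hEnergy f ξ η t p.1 p.2 ^ (k / 2) * f t p.1 p.2

/-- The running supremum of the energy moments `H_k(t) = sup_{0≤s≤t} H̃_k(s)`. -/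
def Hmom (f : ℝ → E3 → E3 → ℝ) (ξ η : ℝ → E3) (k t : ℝ) : ℝ :=
  sSup (Htilde f ξ η k '' Icc 0 t)

open scoped RealInnerProductSpace

lemma rho_nonneg {f : ℝ → E3 → E3 → ℝ} (hf : ∀ t x v, 0 ≤ f t x v) (t : ℝ) (x : E3) :
    0 ≤ rho f t x :=
  integral_nonneg fun v => hf t x v

lemma energy_nonneg {f : ℝ → E3 → E3 → ℝ} {ξ η : ℝ → E3}
    (hf : ∀ t x v, 0 ≤ f t x v) (t : ℝ) : 0 ≤ energy f ξ η t := by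
  unfold energy
  refine mul_nonneg (by norm_num) (integral_nonneg fun p => ?_)
  refine add_nonneg (add_nonneg (mul_nonneg (sq_nonneg _) (hf _ _ _))
    (mul_nonneg (by norm_num) (sq_nonneg _))) ?_
  refine mul_nonneg (by norm_num) (integral_nonneg fun a => integral_nonneg fun b => ?_)
  refine add_nonneg (div_nonneg (mul_nonneg (rho_nonneg hf _ _) (rho_nonneg hf _ _))
    (norm_nonneg _)) ?_
  exact integral_nonneg fun z => div_nonneg (rho_nonneg hf _ _) (norm_nonneg _)

lemma hEnergy_ge_one {f : ℝ → E3 → E3 → ℝ} {ξ η : ℝ → E3}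
    (hf : ∀ t x v, 0 ≤ f t x v) (t : ℝ) (x v : E3) :
    ‖v - η t‖ ^ 2 / 2 + 1 ≤ hEnergy f ξ η t x v := by
  have h1 : 0 ≤ ‖x - ξ t‖⁻¹ := inv_nonneg.mpr (norm_nonneg _)
  have h2 : 0 ≤ energy f ξ η 0 := energy_nonneg hf 0
  have h3 : (0:ℝ) ≤ (mass f 0)⁻¹ :=
    inv_nonneg.mpr (integral_nonneg fun p => hf _ _ _)
  unfold hEnergy
  linarith

set_option maxHeartbeats 1600000 in
/-- Variation of the microscopic energy along plasma trajectories. -/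
theorem statement_9 (T : ℝ) (S : VPClassicalSolution T)
    (x v : ℝ → E3)
    (hx : ∀ t ∈ Icc (0 : ℝ) T, HasDerivAt x (v t) t)
    (hv : ∀ t ∈ Icc (0 : ℝ) T,
      HasDerivAt v (Efield S.f t (x t) + Fpt S.ξ t (x t)) t)
    (hne : ∀ t ∈ Icc (0 : ℝ) T, x t ≠ S.ξ t) :
    ∀ t ∈ Icc (0 : ℝ) T,
      deriv (fun τ : ℝ => Real.sqrt (hEnergy S.f S.ξ S.η τ (x τ) (v τ))) t
        ≤ ‖Efield S.f t (x t)‖ + ‖Efield S.f t (S.ξ t)‖ := by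
  intro t ht
  have hxt := hx t ht
  have hvt := hv t ht
  have hξt := S.ξ_ode t
  have hηt := S.η_ode t ht
  set A : E3 := Efield S.f t (x t) with hA
  set B : E3 := Efield S.f t (S.ξ t) with hB
  set w : ℝ → E3 := fun τ => v τ - S.η τ with hwdef
  set u : ℝ → E3 := fun τ => x τ - S.ξ τ with hudef
  have hu0 : u t ≠ 0 := sub_ne_zero.mpr (hne t ht)
  have hupos : (0:ℝ) < ‖u t‖ := norm_pos_iff.mpr hu0
  have hw' : HasDerivAt w (A + Fpt S.ξ t (x t) - B) t := hvt.sub hηt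
  have hu' : HasDerivAt u (w t) t := hxt.sub hξt
  -- derivative of ‖w τ‖²/2
  have hinner_w : HasDerivAt (fun τ => ⟪w τ, w τ⟫)
      (⟪w t, A + Fpt S.ξ t (x t) - B⟫ + ⟪A + Fpt S.ξ t (x t) - B, w t⟫) t :=
    hw'.inner ℝ hw'
  have hnw : HasDerivAt (fun τ => ‖w τ‖ ^ 2 / 2)
      (⟪w t, A + Fpt S.ξ t (x t) - B⟫) t := by
    have : (fun τ => ‖w τ‖ ^ 2 / 2) = fun τ => ⟪w τ, w τ⟫ / 2 := by
      funext τ; rw [real_inner_self_eq_norm_sq]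
    rw [this]
    convert hinner_w.div_const 2 using 1
    case e'_4 => rfl
    case e'_5 => rfl
    have hc : ⟪A + Fpt S.ξ t (x t) - B, w t⟫ = ⟪w t, A + Fpt S.ξ t (x t) - B⟫ :=
      real_inner_comm _ _
    rw [hc]; ring
  -- derivative of ‖u τ‖⁻¹
  have hinner_u : HasDerivAt (fun τ => ⟪u τ, u τ⟫) (2 * ⟪u t, w t⟫) t := by
    convert hu'.inner ℝ hu' using 1
    case e'_4 => rfl
    case e'_5 => rfl
    have hc : ⟪w t, u t⟫ = ⟪u t, w t⟫ := real_inner_comm _ _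
    rw [hc]; ring
  have hself : ⟪u t, u t⟫ = ‖u t‖ ^ 2 := real_inner_self_eq_norm_sq _
  have hφne : ⟪u t, u t⟫ ≠ 0 := by rw [hself]; positivity
  have hsq : Real.sqrt ⟪u t, u t⟫ = ‖u t‖ := by
    rw [hself, Real.sqrt_sq (norm_nonneg _)]
  have hnormu : HasDerivAt (fun τ => ‖u τ‖) (⟪u t, w t⟫ / ‖u t‖) t := by
    have h := hinner_u.sqrt hφne
    have heq : (fun τ => Real.sqrt ⟪u τ, u τ⟫) = fun τ => ‖u τ‖ := by
      funext τ
      rw [real_inner_self_eq_norm_sq, Real.sqrt_sq (norm_nonneg _)]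
    rw [heq, hsq] at h
    convert h using 1
    field_simp
  have hninv : HasDerivAt (fun τ => ‖u τ‖⁻¹) (-(⟪u t, w t⟫ / ‖u t‖ ^ 3)) t := by
    have h := hnormu.inv (ne_of_gt hupos)
    convert h using 1
    case e'_4 => rfl
    case e'_5 => rfl
    case e'_8 => rfl
    rw [neg_div, div_div]
    ring
  -- total derivative of h
  have hF : ⟪w t, Fpt S.ξ t (x t)⟫ = ⟪u t, w t⟫ / ‖u t‖ ^ 3 := by
    have : Fpt S.ξ t (x t) = (‖u t‖ ^ 3)⁻¹ • u t := rfl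
    rw [this, real_inner_smul_right, real_inner_comm]
    ring
  set D : ℝ := ⟪w t, A⟫ - ⟪w t, B⟫ with hD
  have hg : HasDerivAt (fun τ => hEnergy S.f S.ξ S.η τ (x τ) (v τ)) D t := by
    have : (fun τ => hEnergy S.f S.ξ S.η τ (x τ) (v τ))
        = fun τ => (‖w τ‖ ^ 2 / 2 + ‖u τ‖⁻¹)
          + (energy S.f S.ξ S.η 0 + (mass S.f 0)⁻¹ + 1) := by
      funext τ; simp only [hEnergy, hwdef, hudef]; ring
    rw [this]
    have h := (hnw.add hninv).add_const (energy S.f S.ξ S.η 0 + (mass S.f 0)⁻¹ + 1)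
    convert h using 1
    case e'_4 => rfl
    case e'_5 => rfl
    case e'_8 => rfl
    rw [hD, inner_sub_right, inner_add_right, hF]
    ring
  -- h ≥ 1 and ‖w‖² ≤ 2h
  have hge : ‖w t‖ ^ 2 / 2 + 1 ≤ hEnergy S.f S.ξ S.η t (x t) (v t) :=
    hEnergy_ge_one S.f_nonneg t (x t) (v t)
  have hpos : (0:ℝ) < hEnergy S.f S.ξ S.η t (x t) (v t) := by
    nlinarith [hge, sq_nonneg ‖w t‖]
  have hsqrt := hg.sqrt (ne_of_gt hpos)
  rw [hsqrt.deriv]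
  -- final estimate
  set s : ℝ := Real.sqrt (hEnergy S.f S.ξ S.η t (x t) (v t)) with hs
  have hs1 : 1 ≤ s := by
    rw [hs, show (1:ℝ) = Real.sqrt 1 by simp]
    exact Real.sqrt_le_sqrt (by nlinarith [sq_nonneg ‖w t‖])
  have hs0 : 0 < s := lt_of_lt_of_le one_pos hs1
  have hssq : s ^ 2 = hEnergy S.f S.ξ S.η t (x t) (v t) := Real.sq_sqrt hpos.le
  have hw2s : ‖w t‖ ≤ 2 * s := by
    nlinarith [norm_nonneg (w t), sq_nonneg (‖w t‖ - 2 * s)]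
  have hDle : D ≤ ‖w t‖ * (‖A‖ + ‖B‖) := by
    have h1 : ⟪w t, A⟫ ≤ ‖w t‖ * ‖A‖ := real_inner_le_norm _ _
    have h2 : -⟪w t, B⟫ ≤ ‖w t‖ * ‖B‖ := by
      have := real_inner_le_norm (w t) (-B)
      simpa using this
    rw [hD]; nlinarith
  have hAB : (0:ℝ) ≤ ‖A‖ + ‖B‖ := by positivity
  rw [div_le_iff₀ (by positivity : (0:ℝ) < 2 * s)]
  calc D ≤ ‖w t‖ * (‖A‖ + ‖B‖) := hDle
    _ ≤ 2 * s * (‖A‖ + ‖B‖) := by nlinarith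
    _ = (‖A‖ + ‖B‖) * (2 * s) := by ring

end
end
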